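/- If an entire function g on ℂⁿ is, for each fixed value of the first n−1 variables, a polynomial in the last variable with degree uniformly bounded by M, and for each fixed value of the last variable, a polynomial in the first n−1 variables with uniformly bounded degree, then g is a polynomial in all n variables. -/

import Mathlib

open Complex

/-- **Separate polynomiality implies joint polynomiality** for entire functions.
If an entire function `g` on `ℂ^{n+1}` is, for each fixed value of the first `n`
variables, a polynomial of degree ≤ `M` in the last variable, and for each fixed
value of the last variable a polynomial of total degree ≤ `M'` in the first `n`
variables, then `g` is a polynomial in all `n+1` variables. -/
theorem stmt_3 (n : ℕ) (g : (Fin (n + 1) → ℂ) → ℂ)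
    (hentire : Differentiable ℂ g)
    (hlast : ∃ M : ℕ, ∀ zt : Fin n → ℂ, ∃ P : Polynomial ℂ, P.natDegree ≤ M ∧
      ∀ w : ℂ, g (Fin.snoc zt w) = P.eval w)
    (hinit : ∃ M' : ℕ, ∀ w : ℂ, ∃ P : MvPolynomial (Fin n) ℂ, P.totalDegree ≤ M' ∧
      ∀ zt : Fin n → ℂ, g (Fin.snoc zt w) = MvPolynomial.eval zt P) :
    ∃ P : MvPolynomial (Fin (n + 1)) ℂ, ∀ z : Fin (n + 1) → ℂ,
      g z = MvPolynomial.eval z P := by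
  obtain ⟨M, hM⟩ := hlast
  obtain ⟨M', hM'⟩ := hinit
  -- nodes
  set v : Fin (M + 1) → ℂ := fun j => (j : ℕ) with hv
  have hvs : Set.InjOn v (Finset.univ : Finset (Fin (M + 1))) := by
    intro a _ b _ hab
    have : ((a : ℕ) : ℂ) = ((b : ℕ) : ℂ) := hab
    exact Fin.ext (Nat.cast_injective this)
  -- key interpolation identity
  have key : ∀ (zt : Fin n → ℂ) (w : ℂ),
      g (Fin.snoc zt w) = ∑ j : Fin (M + 1),
        g (Fin.snoc zt (v j)) * (Lagrange.basis Finset.univ v j).eval w := by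
    intro zt w
    obtain ⟨P, hPdeg, hPeval⟩ := hM zt
    have hdlt : P.degree < (Finset.univ : Finset (Fin (M + 1))).card := by
      rw [Finset.card_univ, Fintype.card_fin]
      refine lt_of_le_of_lt P.degree_le_natDegree ?_
      exact_mod_cast Nat.lt_succ_of_le hPdeg
    have hP := Lagrange.eq_interpolate hvs hdlt
    calc g (Fin.snoc zt w) = P.eval w := hPeval w
      _ = _ := by
          conv_lhs => rw [hP]
          rw [Lagrange.interpolate_apply, Polynomial.eval_finset_sum]
          refine Finset.sum_congr rfl fun j _ => ?_
          rw [Polynomial.eval_mul, Polynomial.eval_C, ← hPeval]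
  -- polynomials for g(·, v j)
  choose Q hQdeg hQeval using fun j : Fin (M + 1) => hM' (v j)
  refine ⟨∑ j : Fin (M + 1), (MvPolynomial.rename Fin.castSucc (Q j)) *
      (Polynomial.aeval (MvPolynomial.X (Fin.last n)) (Lagrange.basis Finset.univ v j)), ?_⟩
  intro z
  have hz : z = Fin.snoc (Fin.init z) (z (Fin.last n)) := (Fin.snoc_init_self z).symm
  rw [map_sum]
  conv_lhs => rw [hz, key (Fin.init z) (z (Fin.last n))]
  refine Finset.sum_congr rfl fun j _ => ?_
  rw [map_mul]
  congr 1
  · rw [hQeval j (Fin.init z), MvPolynomial.eval_rename]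
    rfl
  · have hae : ∀ (p : MvPolynomial (Fin (n + 1)) ℂ),
        MvPolynomial.aeval z p = MvPolynomial.eval z p := fun p => by
      rw [← MvPolynomial.coe_aeval_eq_eval]; rfl
    rw [← hae, ← Polynomial.aeval_algHom_apply (MvPolynomial.aeval z), MvPolynomial.aeval_X]
    simp [Polynomial.aeval_def]
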